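/- Let g, k : (0,∞) → (0,∞) be strictly increasing differentiable functions with k'(x) > 0 for all x > 0. Let p, u > 0 with p ≠ u, let h(x,q) = g(q)/(g(q)+k(x)), and set f(x) = d( h(x,p) | h(x,u) ) for x > 0, where d(q|r) = q·log(q/r) + (1−q)·log((1−q)/(1−r)). Set C = ( g(p)·g(u) − g(p)² − g(p)·g(u)·log(g(u)/g(p)) ) / ( g(p) − g(u) + g(p)·log(g(u)/g(p)) ). Then C > 0, f'(x) > 0 for every x > 0 with k(x) < C, and f'(x) < 0 for every x > 0 with k(x) > C; in particular f is quasi-concave on (0,∞) and attains its maximum exactly at points x* with k(x*) = C. -/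

import Mathlib

/-- Kullback–Leibler divergence between Bernoulli distributions with means `q` and `r`. -/
noncomputable def klBern (q r : ℝ) : ℝ :=
  q * Real.log (q / r) + (1 - q) * Real.log ((1 - q) / (1 - r))

/-- Lemma B.5 for the general family h(x,p) = g(p)/(g(p)+k(x)): the KL divergence
curve f(x) = d(h(x,p)|h(x,u)) is unimodal on (0,∞), increasing where k(x) < C and
decreasing where k(x) > C, hence quasi-concave with maximum exactly where k(x) = C. -/
theorem kl_curve_unimodal_general
    (g k : ℝ → ℝ)
    (hg_pos : ∀ q > (0:ℝ), 0 < g q) (hk_pos : ∀ x > (0:ℝ), 0 < k x)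
    (hg_mono : StrictMonoOn g (Set.Ioi 0)) (hk_mono : StrictMonoOn k (Set.Ioi 0))
    (hg_diff : ∀ q > (0:ℝ), DifferentiableAt ℝ g q)
    (hk_diff : ∀ x > (0:ℝ), DifferentiableAt ℝ k x)
    (hk' : ∀ x > (0:ℝ), 0 < deriv k x)
    (p u : ℝ) (hp : 0 < p) (hu : 0 < u) (hne : p ≠ u)
    (C : ℝ)
    (hC : C = (g p * g u - g p ^ 2 - g p * g u * Real.log (g u / g p)) /
        (g p - g u + g p * Real.log (g u / g p)))
    (f : ℝ → ℝ)
    (hf : ∀ x, f x = klBern (g p / (g p + k x)) (g u / (g u + k x))) :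
    0 < C ∧
    (∀ x > (0:ℝ), k x < C → 0 < deriv f x) ∧
    (∀ x > (0:ℝ), C < k x → deriv f x < 0) ∧
    (∀ x y z : ℝ, 0 < x → x ≤ y → y ≤ z → min (f x) (f z) ≤ f y) ∧
    (∀ x > (0:ℝ), (IsMaxOn f (Set.Ioi 0) x ↔ k x = C)) := by

  have ha : 0 < g p := hg_pos p hp
  have hb : 0 < g u := hg_pos u hu
  have hab : g p ≠ g u := fun h => hne (hg_mono.injOn hp hu h)
  set a := g p with ha_def
  set b := g u with hb_def
  set L := Real.log (a / b) with hL_def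
  have hLba : Real.log (b / a) = -L := by
    rw [hL_def, Real.log_div hb.ne' ha.ne', Real.log_div ha.ne' hb.ne']; ring
  set D := a - b - a * L with hD_def
  set N := a - b - b * L with hN_def
  have hba1 : b / a ≠ 1 := by
    rw [Ne, div_eq_one_iff_eq ha.ne']; exact fun h => hab h.symm
  have hab1 : a / b ≠ 1 := by
    rw [Ne, div_eq_one_iff_eq hb.ne']; exact hab
  have hD : D < 0 := by
    have h1 : Real.log (b / a) < b / a - 1 :=
      Real.log_lt_sub_one_of_pos (div_pos hb ha) hba1
    rw [hLba] at h1
    have key : a * (b / a - 1) = b - a := by field_simp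
    have h2 := mul_lt_mul_of_pos_left h1 ha
    rw [hD_def]; nlinarith
  have hN : 0 < N := by
    have h1 : Real.log (a / b) < a / b - 1 :=
      Real.log_lt_sub_one_of_pos (div_pos ha hb) hab1
    rw [← hL_def] at h1
    have key : b * (a / b - 1) = a - b := by field_simp
    have h2 := mul_lt_mul_of_pos_left h1 hb
    rw [hN_def]; nlinarith
  have hCval : C = -(a * N) / D := by
    rw [hLba] at hC
    rw [hC, hD_def, hN_def]
    ring_nf
  have hC0 : 0 < C := by
    rw [hCval]
    exact div_pos_of_neg_of_neg (by nlinarith) hD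
  have hDC : D * C = -(a * N) := by
    rw [hCval]
    field_simp
    rw [div_self hD.ne]
  -- pointwise formula for f on (0, ∞)
  have hfF : ∀ y ∈ Set.Ioi (0:ℝ), f y =
      a * L * (a + k y)⁻¹ + (Real.log (b + k y) - Real.log (a + k y)) := by
    intro y hy
    have ht : 0 < k y := hk_pos y hy
    have hat : 0 < a + k y := by linarith
    have hbt : 0 < b + k y := by linarith
    have e1 : 1 - a / (a + k y) = k y / (a + k y) := by field_simp; ring
    have e2 : 1 - b / (b + k y) = k y / (b + k y) := by field_simp; ring
    have l1 : Real.log (a / (a + k y) / (b / (b + k y)))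
        = L + (Real.log (b + k y) - Real.log (a + k y)) := by
      rw [Real.log_div (div_pos ha hat).ne' (div_pos hb hbt).ne',
        Real.log_div ha.ne' hat.ne', Real.log_div hb.ne' hbt.ne',
        hL_def, Real.log_div ha.ne' hb.ne']
      ring
    have l2 : Real.log (k y / (a + k y) / (k y / (b + k y)))
        = Real.log (b + k y) - Real.log (a + k y) := by
      rw [Real.log_div (div_pos ht hat).ne' (div_pos ht hbt).ne',
        Real.log_div ht.ne' hat.ne', Real.log_div ht.ne' hbt.ne']
      ring
    rw [hf y]
    simp only [klBern]
    rw [e1, e2, l1, l2]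
    field_simp
    ring
  -- derivative formula
  have hfD : ∀ x ∈ Set.Ioi (0:ℝ), HasDerivAt f
      (deriv k x * (D * (k x - C)) / ((a + k x) ^ 2 * (b + k x))) x := by
    intro x hx
    have ht : 0 < k x := hk_pos x hx
    have hat : 0 < a + k x := by linarith
    have hbt : 0 < b + k x := by linarith
    have hkd : HasDerivAt k (deriv k x) x := (hk_diff x hx).hasDerivAt
    have h1 : HasDerivAt (fun y => a + k y) (deriv k x) x := hkd.const_add a
    have h1b : HasDerivAt (fun y => b + k y) (deriv k x) x := hkd.const_add b
    have h2 : HasDerivAt (fun y => (a + k y)⁻¹) (-(deriv k x) / (a + k x) ^ 2) x :=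
      h1.inv hat.ne'
    have h3 : HasDerivAt (fun y => a * L * (a + k y)⁻¹)
        (a * L * (-(deriv k x) / (a + k x) ^ 2)) x := h2.const_mul (a * L)
    have h4 : HasDerivAt (fun y => Real.log (b + k y)) (deriv k x / (b + k x)) x :=
      h1b.log hbt.ne'
    have h5 : HasDerivAt (fun y => Real.log (a + k y)) (deriv k x / (a + k x)) x :=
      h1.log hat.ne'
    have hF : HasDerivAt
        (fun y => a * L * (a + k y)⁻¹ + (Real.log (b + k y) - Real.log (a + k y)))
        (a * L * (-(deriv k x) / (a + k x) ^ 2)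
          + (deriv k x / (b + k x) - deriv k x / (a + k x))) x := h3.add (h4.sub h5)
    have heq : f =ᶠ[nhds x]
        (fun y => a * L * (a + k y)⁻¹ + (Real.log (b + k y) - Real.log (a + k y))) := by
      filter_upwards [isOpen_Ioi.mem_nhds hx] with y hy
      exact hfF y hy
    have hF' := hF.congr_of_eventuallyEq heq
    refine hF'.congr_deriv ?_
    have hkey : D * (k x - C) = D * k x + a * N := by rw [mul_sub, hDC]; ring
    rw [hkey, hD_def, hN_def]
    field_simp
    ring
  have hdiff : ∀ x ∈ Set.Ioi (0:ℝ), DifferentiableAt ℝ f x :=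
    fun x hx => (hfD x hx).differentiableAt
  have hcont : ContinuousOn f (Set.Ioi 0) :=
    fun x hx => (hdiff x hx).continuousAt.continuousWithinAt
  have hderiv_pos : ∀ x > (0:ℝ), k x < C → 0 < deriv f x := by
    intro x hx hlt
    rw [(hfD x hx).deriv]
    have ht : 0 < k x := hk_pos x hx
    have hat : 0 < a + k x := by linarith
    have hbt : 0 < b + k x := by linarith
    exact div_pos (mul_pos (hk' x hx) (mul_pos_of_neg_of_neg hD (by linarith)))
      (mul_pos (pow_pos hat 2) hbt)
  have hderiv_neg : ∀ x > (0:ℝ), C < k x → deriv f x < 0 := by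
    intro x hx hlt
    rw [(hfD x hx).deriv]
    have ht : 0 < k x := hk_pos x hx
    have hat : 0 < a + k x := by linarith
    have hbt : 0 < b + k x := by linarith
    exact div_neg_of_neg_of_pos
      (mul_neg_of_pos_of_neg (hk' x hx) (mul_neg_of_neg_of_pos hD (by linarith)))
      (mul_pos (pow_pos hat 2) hbt)
  have lemA : ∀ x y : ℝ, 0 < x → x < y → k y ≤ C → f x < f y := by
    intro x y hx hxy hky
    have hy : 0 < y := hx.trans hxy
    have hsub : Set.Icc x y ⊆ Set.Ioi 0 := fun z hz => lt_of_lt_of_le hx hz.1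
    have hmono : StrictMonoOn f (Set.Icc x y) := by
      apply strictMonoOn_of_deriv_pos (convex_Icc x y) (hcont.mono hsub)
      intro z hz
      rw [interior_Icc] at hz
      have hz0 : 0 < z := hx.trans hz.1
      have hkz : k z < C :=
        lt_of_lt_of_le (hk_mono (Set.mem_Ioi.mpr hz0) (Set.mem_Ioi.mpr hy) hz.2) hky
      exact hderiv_pos z hz0 hkz
    exact hmono (Set.left_mem_Icc.mpr hxy.le) (Set.right_mem_Icc.mpr hxy.le) hxy
  have lemB : ∀ x y : ℝ, 0 < x → x < y → C ≤ k x → f y < f x := by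
    intro x y hx hxy hkx
    have hy : 0 < y := hx.trans hxy
    have hsub : Set.Icc x y ⊆ Set.Ioi 0 := fun z hz => lt_of_lt_of_le hx hz.1
    have hanti : StrictAntiOn f (Set.Icc x y) := by
      apply strictAntiOn_of_deriv_neg (convex_Icc x y) (hcont.mono hsub)
      intro z hz
      rw [interior_Icc] at hz
      have hz0 : 0 < z := hx.trans hz.1
      have hkz : C < k z :=
        lt_of_le_of_lt hkx (hk_mono (Set.mem_Ioi.mpr hx) (Set.mem_Ioi.mpr hz0) hz.1)
      exact hderiv_neg z hz0 hkz
    exact hanti (Set.left_mem_Icc.mpr hxy.le) (Set.right_mem_Icc.mpr hxy.le) hxy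
  refine ⟨hC0, hderiv_pos, hderiv_neg, ?_, ?_⟩
  · intro x y z hx hxy hyz
    rcases eq_or_lt_of_le hxy with rfl | hxy'
    · exact min_le_left _ _
    rcases eq_or_lt_of_le hyz with rfl | hyz'
    · exact min_le_right _ _
    have hy : 0 < y := hx.trans hxy'
    rcases le_total (k y) C with h | h
    · exact le_trans (min_le_left _ _) (lemA x y hx hxy' h).le
    · exact le_trans (min_le_right _ _) (lemB y z hy hyz' h).le
  · intro x hx
    constructor
    · intro hmax
      by_contra hneq
      rcases lt_or_gt_of_ne hneq with hlt | hgt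
      · have hkc : ContinuousAt k x := (hk_diff x hx).continuousAt
        have hev : ∀ᶠ y in nhds x, k y < C := hkc.eventually (eventually_lt_nhds hlt)
        obtain ⟨y, hyC, hyx⟩ :=
          ((hev.filter_mono nhdsWithin_le_nhds).and
            (eventually_mem_nhdsWithin (s := Set.Ioi x))).exists
        have hfy : f x < f y := lemA x y hx hyx hyC.le
        exact absurd (isMaxOn_iff.mp hmax y (hx.trans hyx)) (not_le.mpr hfy)
      · have hkc : ContinuousAt k x := (hk_diff x hx).continuousAt
        have hev : ∀ᶠ y in nhds x, C < k y := hkc.eventually (eventually_gt_nhds hgt)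
        have hev2 : ∀ᶠ y in nhds x, 0 < y := eventually_gt_nhds hx
        obtain ⟨y, ⟨hyC, hy0⟩, hyx⟩ :=
          (((hev.and hev2).filter_mono nhdsWithin_le_nhds).and
            (eventually_mem_nhdsWithin (s := Set.Iio x))).exists
        have hfy : f x < f y := lemB y x hy0 hyx hyC.le
        exact absurd (isMaxOn_iff.mp hmax y hy0) (not_le.mpr hfy)
    · intro hkx
      refine isMaxOn_iff.mpr fun y hy => ?_
      rcases lt_trichotomy y x with h | h | h
      · exact (lemA y x hy h hkx.le).le
      · rw [h]
      · exact (lemB x y hx h hkx.ge).le
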